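/- Let φ be an Orlicz function taking only finite values and such that ∑_{n=n₁}^∞ φ(1/n) < ∞ for some n₁ ∈ ℕ. Then for every x ∈ A_φ: ‖x‖_φ = 1 if and only if ρ_φ(x) = 1. -/

import Mathlib

open scoped ENNReal
open Filter

/-- An Orlicz function: `φ : ℝ → [0,∞]` even, convex, left continuous on `ℝ₊`,
continuous at zero, with `φ 0 = 0` and `φ u → ∞` as `u → ∞`. -/
structure OrliczFunction where
  toFun : ℝ → ℝ≥0∞
  even' : ∀ u : ℝ, toFun (-u) = toFun u
  convex' : ∀ u v t : ℝ, 0 ≤ t → t ≤ 1 →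
    toFun (t * u + (1 - t) * v) ≤ ENNReal.ofReal t * toFun u + ENNReal.ofReal (1 - t) * toFun v
  map_zero' : toFun 0 = 0
  leftContinuous' : ∀ t : ℝ, 0 < t → Tendsto toFun (nhdsWithin t (Set.Iio t)) (nhds (toFun t))
  continuousAtZero' : Tendsto toFun (nhds 0) (nhds 0)
  tendsto_top' : Tendsto toFun atTop (nhds ⊤)

/-- The Cesàro mean `σx(n) = (1/n) ∑_{j=1}^n |x j|` (with `0`-based indexing). -/
noncomputable def cesaroMean (x : ℕ → ℝ) (n : ℕ) : ℝ :=
  (∑ j ∈ Finset.range (n + 1), |x j|) / (n + 1)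

/-- The modular `ρ_φ(x) = ∑_i φ(σx(i))`. -/
noncomputable def rho (φ : OrliczFunction) (x : ℕ → ℝ) : ℝ≥0∞ :=
  ∑' n : ℕ, φ.toFun (cesaroMean x n)

/-- The Cesàro–Orlicz sequence space `ces_φ`. -/
def cesOrlicz (φ : OrliczFunction) : Set (ℕ → ℝ) :=
  {x | ∃ lam : ℝ, 0 < lam ∧ rho φ (fun i => lam * x i) < ⊤}

/-- The Luxemburg norm `‖x‖_φ = inf {λ > 0 : ρ_φ(x/λ) ≤ 1}`. -/
noncomputable def luxNorm (φ : OrliczFunction) (x : ℕ → ℝ) : ℝ :=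
  sInf {lam : ℝ | 0 < lam ∧ rho φ (fun i => x i / lam) ≤ 1}

/-- The subspace `A_φ` of `ces_φ`. -/
def Aphi (φ : OrliczFunction) : Set (ℕ → ℝ) :=
  {x | x ∈ cesOrlicz φ ∧ ∀ k : ℝ, 0 < k → ∃ nk : ℕ,
    ∑' n : ℕ, φ.toFun ((k / ((nk + n + 1 : ℕ) : ℝ)) * ∑ i ∈ Finset.range (nk + n + 1), |x i|) < ⊤}

/-- `∃ n₁, ∑_{n=n₁}^∞ φ(1/n) < ∞`. -/
def TailFinite (φ : OrliczFunction) : Prop :=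
  ∃ n₁ : ℕ, ∑' n : ℕ, φ.toFun (((n₁ + n + 1 : ℕ) : ℝ)⁻¹) < ⊤

/-- The `Δ₂`-condition at zero. -/
def Delta2Zero (φ : OrliczFunction) : Prop :=
  ∃ K : ℝ, 0 < K ∧ ∃ a : ℝ, 0 < a ∧ 0 < φ.toFun a ∧
    ∀ u : ℝ, 0 ≤ u → u ≤ a → φ.toFun (2 * u) ≤ ENNReal.ofReal K * φ.toFun u

/-- `φ` takes only finite values. -/
def FiniteValued (φ : OrliczFunction) : Prop := ∀ u : ℝ, φ.toFun u ≠ ⊤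

section Aux

variable (φ : OrliczFunction)

lemma phi_mono {s t : ℝ} (hs : 0 ≤ s) (hst : s ≤ t) : φ.toFun s ≤ φ.toFun t := by
  rcases eq_or_lt_of_le (hs.trans hst) with h | ht
  · have : s = 0 := le_antisymm (hst.trans h.symm.le) hs
    rw [this, ← h]
  · have h1 : s / t ≤ 1 := div_le_one_of_le₀ hst ht.le
    have h0 : 0 ≤ s / t := div_nonneg hs ht.le
    have := φ.convex' t 0 (s / t) h0 h1
    rw [mul_zero, add_zero, div_mul_cancel₀ _ ht.ne', φ.map_zero', mul_zero, add_zero] at this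
    calc φ.toFun s ≤ ENNReal.ofReal (s / t) * φ.toFun t := this
    _ ≤ 1 * φ.toFun t := by
        gcongr
        exact ENNReal.ofReal_le_one.2 h1
    _ = φ.toFun t := one_mul _

lemma cesaroMean_nonneg (x : ℕ → ℝ) (n : ℕ) : 0 ≤ cesaroMean x n := by
  unfold cesaroMean
  positivity

lemma cesaroMean_smul (c : ℝ) (hc : 0 ≤ c) (x : ℕ → ℝ) (n : ℕ) :
    cesaroMean (fun i => c * x i) n = c * cesaroMean x n := by
  unfold cesaroMean
  simp only [abs_mul, abs_of_nonneg hc, ← Finset.mul_sum, mul_div_assoc]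

lemma rho_smul_le {t : ℝ} (ht0 : 0 ≤ t) (ht1 : t ≤ 1) (y : ℕ → ℝ) :
    rho φ (fun i => t * y i) ≤ ENNReal.ofReal t * rho φ y := by
  unfold rho
  rw [← ENNReal.tsum_mul_left]
  refine ENNReal.tsum_le_tsum fun n => ?_
  rw [cesaroMean_smul t ht0 y n]
  have := φ.convex' (cesaroMean y n) 0 t ht0 ht1
  rw [mul_zero, add_zero, φ.map_zero', mul_zero, add_zero] at this
  exact this

lemma rho_convex_le {lam : ℝ} (h1 : 1 ≤ lam) (h2 : lam ≤ 2) (y : ℕ → ℝ) :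
    rho φ (fun i => lam * y i) ≤ ENNReal.ofReal (2 - lam) * rho φ y
      + ENNReal.ofReal (lam - 1) * rho φ (fun i => 2 * y i) := by
  unfold rho
  rw [← ENNReal.tsum_mul_left, ← ENNReal.tsum_mul_left, ← ENNReal.tsum_add]
  refine ENNReal.tsum_le_tsum fun n => ?_
  rw [cesaroMean_smul lam (by linarith) y n, cesaroMean_smul 2 (by norm_num) y n]
  have := φ.convex' (cesaroMean y n) (2 * cesaroMean y n) (2 - lam)
    (by linarith) (by linarith)
  have harg : (2 - lam) * cesaroMean y n + (1 - (2 - lam)) * (2 * cesaroMean y n)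
      = lam * cesaroMean y n := by ring
  rw [harg] at this
  have hco : (1 : ℝ) - (2 - lam) = lam - 1 := by ring
  rw [hco] at this
  exact this

lemma rho_mono_scale {a b : ℝ} (ha : 0 ≤ a) (hab : a ≤ b) (y : ℕ → ℝ) :
    rho φ (fun i => a * y i) ≤ rho φ (fun i => b * y i) := by
  unfold rho
  refine ENNReal.tsum_le_tsum fun n => ?_
  rw [cesaroMean_smul a ha y n, cesaroMean_smul b (ha.trans hab) y n]
  exact phi_mono φ (mul_nonneg ha (cesaroMean_nonneg y n))
    (mul_le_mul_of_nonneg_right hab (cesaroMean_nonneg y n))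

lemma rho_two_lt_top (hfin : FiniteValued φ) {x : ℕ → ℝ} (hx : x ∈ Aphi φ) :
    rho φ (fun i => 2 * x i) < ⊤ := by
  obtain ⟨nk, hnk⟩ := hx.2 2 two_pos
  have hrw : rho φ (fun i => 2 * x i) = ∑' n, φ.toFun (2 * cesaroMean x n) := by
    unfold rho
    exact tsum_congr fun n => by rw [cesaroMean_smul 2 (by norm_num) x n]
  rw [hrw]
  have hsplit := Summable.sum_add_tsum_nat_add' (f := fun n => φ.toFun (2 * cesaroMean x n)) (k := nk)
    ENNReal.summable
  rw [← hsplit]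
  have htail : ∑' (n : ℕ), φ.toFun (2 * cesaroMean x (n + nk)) < ⊤ := by
    have heq : ∀ n : ℕ, φ.toFun (2 * cesaroMean x (n + nk))
        = φ.toFun ((2 / ((nk + n + 1 : ℕ) : ℝ)) * ∑ i ∈ Finset.range (nk + n + 1), |x i|) := by
      intro n
      congr 1
      unfold cesaroMean
      have hnn : n + nk + 1 = nk + n + 1 := by omega
      rw [hnn]
      have hpos : ((nk + n + 1 : ℕ) : ℝ) ≠ 0 := by positivity
      push_cast at hpos ⊢
      field_simp
      ring
    rw [tsum_congr heq]
    exact hnk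
  have hhead : ∑ i ∈ Finset.range nk, φ.toFun (2 * cesaroMean x i) < ⊤ :=
    ENNReal.sum_lt_top.2 fun i _ => (hfin _).lt_top
  exact ENNReal.add_lt_top.2 ⟨hhead, htail⟩

lemma exists_delta (C e : ℝ≥0∞) (hC : C < ⊤) (he : 0 < e) :
    ∃ δ : ℝ, 0 < δ ∧ δ < 1 ∧ ENNReal.ofReal δ * C ≤ e := by
  rcases eq_or_ne C 0 with hC0 | hC0
  · exact ⟨1/2, by norm_num, by norm_num, by simp [hC0]⟩
  rcases eq_or_ne e ⊤ with he0 | he0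
  · exact ⟨1/2, by norm_num, by norm_num, by simp [he0]⟩
  have hCpos : 0 < C.toReal := ENNReal.toReal_pos hC0 hC.ne
  have hepos : 0 < e.toReal := ENNReal.toReal_pos he.ne' he0
  refine ⟨min (1/2) (e.toReal / C.toReal), lt_min (by norm_num) (by positivity),
    lt_of_le_of_lt (min_le_left _ _) (by norm_num), ?_⟩
  have h1 : ENNReal.ofReal (min (1/2) (e.toReal / C.toReal)) * C
      ≤ ENNReal.ofReal (e.toReal / C.toReal) * C := by
    gcongr
    exact min_le_right _ _
  refine h1.trans ?_
  calc ENNReal.ofReal (e.toReal / C.toReal) * C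
      = ENNReal.ofReal (e.toReal / C.toReal) * ENNReal.ofReal C.toReal := by
        rw [ENNReal.ofReal_toReal hC.ne]
    _ = ENNReal.ofReal (e.toReal / C.toReal * C.toReal) := by
        rw [ENNReal.ofReal_mul (by positivity)]
    _ = ENNReal.ofReal e.toReal := by rw [div_mul_cancel₀ _ hCpos.ne']
    _ = e := ENNReal.ofReal_toReal he0
    _ ≤ e := le_rfl

end Aux

/-- for finite-valued `φ` and `x ∈ A_φ`, `‖x‖_φ = 1 ↔ ρ_φ(x) = 1`. -/
theorem stmt_9 (φ : OrliczFunction) (hfin : FiniteValued φ) (htail : TailFinite φ)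
    (x : ℕ → ℝ) (hx : x ∈ Aphi φ) :
    luxNorm φ x = 1 ↔ rho φ x = 1 := by
  set S := {lam : ℝ | 0 < lam ∧ rho φ (fun i => x i / lam) ≤ 1} with hSdef
  have hbdd : BddBelow S := ⟨0, fun l hl => hl.1.le⟩
  have hC : rho φ (fun i => 2 * x i) < ⊤ := rho_two_lt_top φ hfin hx
  have hlux : luxNorm φ x = sInf S := rfl
  constructor
  · intro hnorm
    rw [hlux] at hnorm
    have hne : S.Nonempty := by
      by_contra h
      rw [Set.not_nonempty_iff_eq_empty] at h
      rw [h, Real.sInf_empty] at hnorm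
      norm_num at hnorm
    have hlb : ∀ l ∈ S, 1 ≤ l := fun l hl => hnorm ▸ csInf_le hbdd hl
    -- Step A : rho φ x ≤ 1
    have hle : rho φ x ≤ 1 := by
      refine ENNReal.le_of_forall_pos_le_add fun ε hε _ => ?_
      obtain ⟨δ, hδ0, hδ1, hδ⟩ := exists_delta (rho φ (fun i => 2 * x i)) ε hC
        (by exact_mod_cast hε)
      have : sInf S < 1 + δ := by rw [hnorm]; linarith
      obtain ⟨l, hlS, hlδ⟩ := (csInf_lt_iff hbdd hne).1 this
      have hl1 : 1 ≤ l := hlb l hlS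
      have hl0 : (0:ℝ) < l := hlS.1
      have hl2 : l ≤ 2 := by linarith
      set y : ℕ → ℝ := fun i => x i / l with hy
      have hxy : (fun i => l * y i) = x := funext fun i => by
        simp only [hy]; field_simp
      have h2y : (fun i => 2 * y i) = fun i => (2 / l) * x i := funext fun i => by
        simp only [hy]; ring
      have hbound := rho_convex_le φ hl1 hl2 y
      rw [hxy, h2y] at hbound
      have hy1 : rho φ y ≤ 1 := hlS.2
      have h2C : rho φ (fun i => (2 / l) * x i) ≤ rho φ (fun i => 2 * x i) :=
        rho_mono_scale φ (by positivity) (by rw [div_le_iff₀ hl0]; nlinarith) x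
      calc rho φ x ≤ ENNReal.ofReal (2 - l) * rho φ y
            + ENNReal.ofReal (l - 1) * rho φ (fun i => (2 / l) * x i) := hbound
        _ ≤ 1 * 1 + ENNReal.ofReal δ * rho φ (fun i => 2 * x i) := by
            gcongr
            · exact ENNReal.ofReal_le_one.2 (by linarith)
            · linarith
        _ ≤ 1 + ε := by rw [one_mul]; exact add_le_add le_rfl hδ
    -- Step B : 1 ≤ rho φ x
    have hge : (1:ℝ≥0∞) ≤ rho φ x := by
      by_contra h
      push_neg at h
      have hepos : (0:ℝ≥0∞) < 1 - rho φ x := tsub_pos_iff_lt.2 h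
      obtain ⟨δ, hδ0, hδ1, hδ⟩ := exists_delta (rho φ (fun i => 2 * x i)) (1 - rho φ x) hC hepos
      set l : ℝ := 1 + δ with hl
      have hl1 : 1 ≤ l := by linarith
      have hl2 : l ≤ 2 := by linarith
      have hbound := rho_convex_le φ hl1 hl2 x
      have hkey : rho φ (fun i => l * x i) ≤ 1 := by
        refine hbound.trans ?_
        calc ENNReal.ofReal (2 - l) * rho φ x
              + ENNReal.ofReal (l - 1) * rho φ (fun i => 2 * x i)
            ≤ 1 * rho φ x + ENNReal.ofReal δ * rho φ (fun i => 2 * x i) := by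
              gcongr
              · exact ENNReal.ofReal_le_one.2 (by linarith)
              · linarith
          _ ≤ rho φ x + (1 - rho φ x) := by rw [one_mul]; exact add_le_add le_rfl hδ
          _ = 1 := add_tsub_cancel_of_le h.le
      have hlne : l ≠ 0 := by rw [hl]; positivity
      have hmem : 1 / l ∈ S := by
        constructor
        · rw [hl]; positivity
        · have : (fun i => x i / (1 / l)) = fun i => l * x i := funext fun i => by
            field_simp [hlne, mul_comm]
          rw [this]
          exact hkey
      have := csInf_le hbdd hmem
      rw [hnorm] at this
      have : (1:ℝ) < 1 := lt_of_le_of_lt this ((div_lt_one (by linarith)).2 (by linarith))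
      exact lt_irrefl _ this
    exact le_antisymm hle hge
  · intro hrho
    rw [hlux]
    have hmem : (1:ℝ) ∈ S := by
      refine ⟨one_pos, ?_⟩
      have : (fun i => x i / 1) = x := funext fun i => div_one (x i)
      rw [this, hrho]
    refine le_antisymm (csInf_le hbdd hmem) (le_csInf ⟨1, hmem⟩ ?_)
    intro l hlS
    by_contra hcon
    push_neg at hcon
    have hl0 : 0 < l := hlS.1
    have hl1 : l < 1 := hcon
    have := rho_smul_le φ hl0.le hl1.le (fun i => x i / l)
    have hxy : (fun i => l * (x i / l)) = x := funext fun i => by field_simp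
    rw [hxy] at this
    have : rho φ x ≤ ENNReal.ofReal l * 1 :=
      this.trans (mul_le_mul_right hlS.2 _)
    rw [mul_one, hrho] at this
    exact absurd (lt_of_le_of_lt this (ENNReal.ofReal_lt_one.2 hl1)) (lt_irrefl _)
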